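/- The Laplace mechanism M(x) = f(x) + Lap(Δ/ε) satisfies ε-differential privacy: for neighboring inputs x, x' with |f(x) − f(x')| ≤ Δ and any measurable set S ⊆ ℝ, Pr[M(x) ∈ S] ≤ e^ε · Pr[M(x') ∈ S]. -/

import Mathlib

open MeasureTheory

/-- Density of the Laplace distribution with scale `b`. -/
noncomputable def laplaceDensity (b z : ℝ) : ℝ := (1 / (2 * b)) * Real.exp (-|z| / b)

/-- The Laplace mechanism `M(x) = f(x) + Lap(Δ/ε)` satisfies `ε`-DP: for inputs
`x, x'` with `|f x - f x'| ≤ Δ`, every measurable set `S` satisfies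
`Pr[M(x) ∈ S] ≤ e^ε · Pr[M(x') ∈ S]`. -/
theorem laplace_mechanism_dp {D : Type*} (f : D → ℝ) (Δ ε : ℝ)
    (hΔ : 0 < Δ) (hε : 0 < ε)
    (x x' : D) (hsens : |f x - f x'| ≤ Δ)
    (M : D → Measure ℝ)
    (hM : ∀ d, M d = volume.withDensity
      (fun z => ENNReal.ofReal (laplaceDensity (Δ / ε) (z - f d))))
    (S : Set ℝ) (hS : MeasurableSet S) :
    M x S ≤ ENNReal.ofReal (Real.exp ε) * M x' S := by
  have hb : 0 < Δ / ε := div_pos hΔ hε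
  rw [hM x, hM x', withDensity_apply _ hS, withDensity_apply _ hS,
    ← lintegral_const_mul' _ _ ENNReal.ofReal_ne_top]
  refine lintegral_mono fun z => ?_
  rw [← ENNReal.ofReal_mul (Real.exp_pos _).le]
  refine ENNReal.ofReal_le_ofReal ?_
  unfold laplaceDensity
  rw [show Real.exp ε * ((1 / (2 * (Δ / ε))) * Real.exp (-|z - f x'| / (Δ / ε)))
      = (1 / (2 * (Δ / ε))) * (Real.exp ε * Real.exp (-|z - f x'| / (Δ / ε))) by ring,
    ← Real.exp_add]
  refine mul_le_mul_of_nonneg_left (Real.exp_le_exp.mpr ?_)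
    (by positivity)
  rw [div_le_iff₀ hb] at *
  have h1 : |z - f x'| - |z - f x| ≤ Δ := by
    calc |z - f x'| - |z - f x| ≤ |(z - f x') - (z - f x)| := abs_sub_abs_le_abs_sub _ _
    _ = |f x - f x'| := by congr 1; ring
    _ ≤ Δ := hsens
  have : (ε + -|z - f x'| / (Δ / ε)) * (Δ / ε) = Δ + -|z - f x'| := by
    field_simp
  nlinarith [this]
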